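/- For k ≥ 2, any ℂ-linear dependence Σ_r a_r (∂T)_{I_r} = 0 (as linear functionals of T ∈ Λ^k(ℂ^n)) among the coordinate functionals T ↦ (∂T)_I for distinct (k+1)-subsets I_1,…,I_m of {1,…,n} with all a_r ≠ 0 requires m ≥ 4. Consequently, any two distinct hyperplanes {T : (∂T)_I = 0} and {T : (∂T)_J = 0} intersect in codimension 2, and no third such hyperplane contains their intersection. -/

import Mathlib

noncomputable section
open scoped Classical

/-- `T` is a totally antisymmetric tensor of valence `k` on `ℂⁿ`
(function model of `Λᵏ(ℂⁿ)`). -/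
def IsSkew (n k : ℕ) (T : (Fin k → Fin n) → ℂ) : Prop :=
  ∀ (v : Fin k → Fin n) (σ : Equiv.Perm (Fin k)),
    T (v ∘ σ) = ((Equiv.Perm.sign σ : ℤ) : ℂ) * T v

/-- The boundary-type map `∂ : Λᵏ(ℂⁿ) → Λᵏ⁺¹(ℂⁿ)`,
`(∂T)_{i₁…i_{k+1}} = Σ_j (−1)^{j+1} T_{i₁…î_j…i_{k+1}}` (indices `j` numbered from `0`). -/
def bd (n k : ℕ) (T : (Fin k → Fin n) → ℂ) : (Fin (k + 1) → Fin n) → ℂ :=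
  fun v => ∑ j : Fin (k + 1), (-1 : ℂ) ^ (j : ℕ) * T (v ∘ j.succAbove)

/-- The subspace of antisymmetric tensors `Λᵏ(ℂⁿ)` inside all tensors. -/
def skewSubmodule (n k : ℕ) : Submodule ℂ ((Fin k → Fin n) → ℂ) where
  carrier := {T | IsSkew n k T}
  add_mem' := by
    intro a b ha hb v σ
    have h1 := ha v σ
    have h2 := hb v σ
    simp only [Pi.add_apply, h1, h2]
    ring
  zero_mem' := by intro v σ; simp
  smul_mem' := by
    intro c a ha v σ
    have h1 := ha v σ
    simp only [Pi.smul_apply, smul_eq_mul, h1]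
    ring

/-- The coordinate functional `T ↦ (∂T)_I` for a `(k+1)`-subset `I` of `{1,…,n}`
written in increasing order. -/
def coordFn (n k : ℕ) (s : Finset (Fin n)) (h : s.card = k + 1) :
    ((Fin k → Fin n) → ℂ) →ₗ[ℂ] ℂ where
  toFun T := bd n k T (fun i => s.orderEmbOfFin h i)
  map_add' := by
    intro a b
    simp [bd, mul_add, Finset.sum_add_distrib]
  map_smul' := by
    intro c a
    simp only [bd, Pi.smul_apply, smul_eq_mul, RingHom.id_apply]
    rw [Finset.mul_sum]
    exact Finset.sum_congr rfl fun j _ => by ring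


namespace HypAux

variable {n k : ℕ}

/-- The elementary alternating tensor supported on a `k`-subset `J`. -/
def elemSkew (n k : ℕ) (J : Finset (Fin n)) (hJ : J.card = k) : (Fin k → Fin n) → ℂ :=
  fun v => (Matrix.of fun i j : Fin k => if v i = J.orderEmbOfFin hJ j then (1:ℂ) else 0).det

lemma elemSkew_mem (J : Finset (Fin n)) (hJ : J.card = k) :
    elemSkew n k J hJ ∈ skewSubmodule n k := by
  intro v σ
  have h : (Matrix.of fun i j : Fin k => if (v ∘ σ) i = J.orderEmbOfFin hJ j then (1:ℂ) else 0)
      = (Matrix.of fun i j : Fin k =>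
          if v i = J.orderEmbOfFin hJ j then (1:ℂ) else 0).submatrix σ id := rfl
  show (Matrix.of fun i j : Fin k =>
      if (v ∘ σ) i = J.orderEmbOfFin hJ j then (1:ℂ) else 0).det = _
  rw [h, Matrix.det_permute]
  norm_num [elemSkew]

lemma elemSkew_apply_orderEmb (J : Finset (Fin n)) (hJ : J.card = k) :
    elemSkew n k J hJ (fun i => J.orderEmbOfFin hJ i) = 1 := by
  have h : (Matrix.of fun i j : Fin k =>
      if J.orderEmbOfFin hJ i = J.orderEmbOfFin hJ j then (1:ℂ) else 0) = 1 := by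
    ext i j
    simp [Matrix.one_apply, (J.orderEmbOfFin hJ).injective.eq_iff]
  show (Matrix.of fun i j : Fin k =>
      if J.orderEmbOfFin hJ i = J.orderEmbOfFin hJ j then (1:ℂ) else 0).det = 1
  rw [h, Matrix.det_one]

lemma elemSkew_eq_zero (J : Finset (Fin n)) (hJ : J.card = k) (v : Fin k → Fin n)
    (i : Fin k) (hv : v i ∉ J) : elemSkew n k J hJ v = 0 := by
  apply Matrix.det_eq_zero_of_row_eq_zero i
  intro j
  simp only [Matrix.of_apply, ite_eq_right_iff]
  intro h
  rw [h] at hv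
  exact absurd (J.orderEmbOfFin_mem hJ j) hv

lemma elemSkew_strictMono (J : Finset (Fin n)) (hJ : J.card = k)
    {w : Fin k → Fin n} (hm : StrictMono w) (hw : ∀ i, w i ∈ J) :
    elemSkew n k J hJ w = 1 := by
  have h := Finset.orderEmbOfFin_unique hJ hw hm
  rw [show w = fun i => J.orderEmbOfFin hJ i from h]
  exact elemSkew_apply_orderEmb J hJ

lemma card_erase (I : Finset (Fin n)) (hI : I.card = k + 1) (j : Fin (k+1)) :
    (I.erase (I.orderEmbOfFin hI j)).card = k := by
  rw [Finset.card_erase_of_mem (I.orderEmbOfFin_mem hI j), hI]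
  omega

lemma mem_erase_succAbove (I : Finset (Fin n)) (hI : I.card = k + 1) (j : Fin (k+1))
    (i : Fin k) :
    I.orderEmbOfFin hI (j.succAbove i) ∈ I.erase (I.orderEmbOfFin hI j) := by
  refine Finset.mem_erase.2 ⟨?_, I.orderEmbOfFin_mem hI _⟩
  simp only [ne_eq, (I.orderEmbOfFin hI).injective.eq_iff]
  exact Fin.succAbove_ne j i

lemma exists_succAbove_of_mem_erase (I : Finset (Fin n)) (hI : I.card = k + 1)
    (j : Fin (k+1)) {x : Fin n} (hx : x ∈ I.erase (I.orderEmbOfFin hI j)) :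
    ∃ i : Fin k, I.orderEmbOfFin hI (j.succAbove i) = x := by
  obtain ⟨hne, hxI⟩ := Finset.mem_erase.1 hx
  have : x ∈ Set.range (I.orderEmbOfFin hI) := by
    rw [Finset.range_orderEmbOfFin]; exact hxI
  obtain ⟨j', hj'⟩ := this
  have hj'ne : j' ≠ j := by
    rintro rfl; exact hne hj'.symm
  obtain ⟨i, hi⟩ := Fin.exists_succAbove_eq hj'ne
  exact ⟨i, by rw [hi, hj']⟩

lemma coordFn_elemSkew (I : Finset (Fin n)) (hI : I.card = k + 1)
    (J : Finset (Fin n)) (hJ : J.card = k) :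
    coordFn n k I hI (elemSkew n k J hJ)
      = ∑ j : Fin (k+1), (if J = I.erase (I.orderEmbOfFin hI j) then (-1:ℂ)^(j:ℕ) else 0) := by
  show bd n k (elemSkew n k J hJ) (fun i => I.orderEmbOfFin hI i) = _
  unfold bd
  refine Finset.sum_congr rfl fun j _ => ?_
  have hmono : StrictMono ((fun i => I.orderEmbOfFin hI i) ∘ j.succAbove) :=
    (I.orderEmbOfFin hI).strictMono.comp (Fin.strictMono_succAbove j)
  by_cases hcase : J = I.erase (I.orderEmbOfFin hI j)
  · rw [if_pos hcase]
    have hw : ∀ i, ((fun i => I.orderEmbOfFin hI i) ∘ j.succAbove) i ∈ J := by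
      intro i; rw [hcase]; exact mem_erase_succAbove I hI j i
    rw [elemSkew_strictMono J hJ hmono hw, mul_one]
  · rw [if_neg hcase]
    by_cases hsub : ∀ i, ((fun i => I.orderEmbOfFin hI i) ∘ j.succAbove) i ∈ J
    · exfalso
      apply hcase
      refine (Finset.eq_of_subset_of_card_le ?_ ?_).symm
      · intro x hx
        obtain ⟨i, hi⟩ := exists_succAbove_of_mem_erase I hI j hx
        rw [← hi]; exact hsub i
      · rw [card_erase I hI j, hJ]
    · push_neg at hsub
      obtain ⟨i, hi⟩ := hsub
      rw [elemSkew_eq_zero J hJ _ i hi, mul_zero]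

lemma coordFn_elemSkew_of_not_subset (I : Finset (Fin n)) (hI : I.card = k + 1)
    (J : Finset (Fin n)) (hJ : J.card = k) (h : ¬ J ⊆ I) :
    coordFn n k I hI (elemSkew n k J hJ) = 0 := by
  rw [coordFn_elemSkew]
  refine Finset.sum_eq_zero fun j _ => ?_
  rw [if_neg]
  intro he
  exact h (he ▸ Finset.erase_subset _ _)

lemma coordFn_elemSkew_erase (I : Finset (Fin n)) (hI : I.card = k + 1) (j₀ : Fin (k+1)) :
    coordFn n k I hI (elemSkew n k (I.erase (I.orderEmbOfFin hI j₀)) (card_erase I hI j₀))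
      = (-1:ℂ)^(j₀:ℕ) := by
  rw [coordFn_elemSkew]
  rw [Fintype.sum_eq_single j₀]
  · rw [if_pos rfl]
  · intro j hj
    rw [if_neg]
    intro he
    apply hj
    have h2 : I.orderEmbOfFin hI j₀ ∉ I.erase (I.orderEmbOfFin hI j₀) :=
      Finset.notMem_erase _ _
    rw [he] at h2
    have heq : I.orderEmbOfFin hI j = I.orderEmbOfFin hI j₀ := by
      by_contra hne
      exact h2 (Finset.mem_erase.2 ⟨fun h => hne h.symm, I.orderEmbOfFin_mem hI j₀⟩)
    exact (I.orderEmbOfFin hI).injective heq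

lemma erase_inj (I : Finset (Fin n)) (hI : I.card = k + 1) :
    Function.Injective (fun j : Fin (k+1) => I.erase (I.orderEmbOfFin hI j)) := by
  intro j1 j2 h
  dsimp only at h
  have h2 : I.orderEmbOfFin hI j1 ∉ I.erase (I.orderEmbOfFin hI j1) :=
    Finset.notMem_erase _ _
  rw [h] at h2
  have heq : I.orderEmbOfFin hI j1 = I.orderEmbOfFin hI j2 := by
    by_contra hne
    exact h2 (Finset.mem_erase.2 ⟨hne, I.orderEmbOfFin_mem hI j1⟩)
  exact (I.orderEmbOfFin hI).injective heq

lemma pick (hk : 2 ≤ k) (I : Finset (Fin n)) (hI : I.card = k + 1)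
    (B : Finset (Finset (Fin n)))
    (hB1 : ∀ b ∈ B, b.card = k + 1) (hB2 : ∀ b ∈ B, b ≠ I) (hBcard : B.card ≤ k) :
    ∃ j : Fin (k+1), ∀ b ∈ B, ¬ I.erase (I.orderEmbOfFin hI j) ⊆ b := by
  by_contra hcon
  push_neg at hcon
  choose g hg1 hg2 using hcon
  have key : ∀ j, I.erase (I.orderEmbOfFin hI j) = g j ∩ I := by
    intro j
    apply Finset.eq_of_subset_of_card_le
    · exact Finset.subset_inter (hg2 j) (Finset.erase_subset _ _)
    · rw [card_erase I hI j]
      by_contra hlt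
      push_neg at hlt
      have hle1 : (g j ∩ I).card ≤ k + 1 := by
        rw [← hB1 _ (hg1 j)]
        exact Finset.card_le_card Finset.inter_subset_left
      have h1 : (g j ∩ I).card = k + 1 := le_antisymm hle1 hlt
      have h2 : g j ∩ I = g j := by
        apply Finset.eq_of_subset_of_card_le Finset.inter_subset_left
        rw [h1, hB1 _ (hg1 j)]
      have h3 : g j ⊆ I := by rw [← h2]; exact Finset.inter_subset_right
      have h4 : g j = I := by
        apply Finset.eq_of_subset_of_card_le h3
        rw [hI, hB1 _ (hg1 j)]
      exact hB2 _ (hg1 j) h4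
  have hginj : Function.Injective g := by
    intro j1 j2 h
    apply erase_inj I hI
    dsimp only
    rw [key, key, h]
  have hcard : (Finset.univ : Finset (Fin (k+1))).card ≤ B.card :=
    Finset.card_le_card_of_injOn g (fun j _ => hg1 j) (fun a _ b _ h => hginj h)
  rw [Finset.card_univ, Fintype.card_fin] at hcard
  omega

lemma exists_good_tensor (hk : 2 ≤ k) (u : Finset (Fin n)) (hu : u.card = k+1)
    (B : Finset (Finset (Fin n)))
    (hB1 : ∀ b ∈ B, b.card = k + 1) (hB2 : ∀ b ∈ B, b ≠ u) (hBcard : B.card ≤ k) :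
    ∃ T ∈ skewSubmodule n k, coordFn n k u hu T ≠ 0 ∧
      ∀ (b : Finset (Fin n)) (hb : b.card = k + 1), b ∈ B → coordFn n k b hb T = 0 := by
  obtain ⟨j₀, hj₀⟩ := pick hk u hu B hB1 hB2 hBcard
  refine ⟨elemSkew n k (u.erase (u.orderEmbOfFin hu j₀)) (card_erase u hu j₀),
    elemSkew_mem _ _, ?_, ?_⟩
  · rw [coordFn_elemSkew_erase]
    exact pow_ne_zero _ (by norm_num)
  · intro b hb hbB
    exact coordFn_elemSkew_of_not_subset b hb _ _ (hj₀ b hbB)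

end HypAux

open HypAux

/-- for `k ≥ 2`, any nontrivial linear dependence among the
functionals `T ↦ (∂T)_I` (over distinct `(k+1)`-subsets `I`, with all
coefficients nonzero) has length at least `4`; consequently any two of the
hyperplanes `{(∂T)_I = 0}` in `Λᵏ(ℂⁿ)` intersect in codimension `2` and no
third such hyperplane contains their intersection. -/
theorem hyperplanes_double_intersection {n k : ℕ} (hk : 2 ≤ k) :
    (∀ (m : ℕ) (a : Fin m → ℂ) (I : Fin m → Finset (Fin n))
        (hI : ∀ r, (I r).card = k + 1),
        m ≠ 0 → Function.Injective I → (∀ r, a r ≠ 0) →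
        (∀ T ∈ skewSubmodule n k, ∑ r, a r * coordFn n k (I r) (hI r) T = 0) →
        4 ≤ m) ∧
    (∀ (s t u : Finset (Fin n)) (hs : s.card = k + 1) (ht : t.card = k + 1)
        (hu : u.card = k + 1), s ≠ t → u ≠ s → u ≠ t →
        (Module.finrank ℂ
            ((skewSubmodule n k ⊓ LinearMap.ker (coordFn n k s hs)
              ⊓ LinearMap.ker (coordFn n k t ht) : Submodule ℂ ((Fin k → Fin n) → ℂ))) + 2
          = Module.finrank ℂ (skewSubmodule n k)) ∧
        ∃ T ∈ skewSubmodule n k ⊓ LinearMap.ker (coordFn n k s hs)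
            ⊓ LinearMap.ker (coordFn n k t ht),
          coordFn n k u hu T ≠ 0) := by
  constructor
  · -- Part 1: any dependence has length ≥ 4
    intro m a I hI hm hinj ha hvan
    by_contra hlt
    push_neg at hlt
    have hm3 : m ≤ 3 := by omega
    set r₀ : Fin m := ⟨0, Nat.pos_of_ne_zero hm⟩ with hr₀
    set B : Finset (Finset (Fin n)) := (Finset.univ.erase r₀).image I with hB
    have hB1 : ∀ b ∈ B, b.card = k + 1 := by
      intro b hb
      obtain ⟨r, _, rfl⟩ := Finset.mem_image.1 hb
      exact hI r
    have hB2 : ∀ b ∈ B, b ≠ I r₀ := by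
      intro b hb
      obtain ⟨r, hr, rfl⟩ := Finset.mem_image.1 hb
      intro h
      exact (Finset.mem_erase.1 hr).1 (hinj h)
    have hBcard : B.card ≤ k := by
      have h1 : B.card ≤ (Finset.univ.erase r₀).card := Finset.card_image_le
      rw [Finset.card_erase_of_mem (Finset.mem_univ r₀), Finset.card_univ,
        Fintype.card_fin] at h1
      omega
    obtain ⟨j₀, hj₀⟩ := pick hk (I r₀) (hI r₀) B hB1 hB2 hBcard
    have hT := hvan (elemSkew n k ((I r₀).erase ((I r₀).orderEmbOfFin (hI r₀) j₀))
        (card_erase (I r₀) (hI r₀) j₀)) (elemSkew_mem _ _)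
    rw [Finset.sum_eq_single r₀ (fun r _ hr => ?side1) (fun h => absurd (Finset.mem_univ r₀) h)]
      at hT
    · rw [coordFn_elemSkew_erase] at hT
      rcases mul_eq_zero.1 hT with h | h
      · exact ha r₀ h
      · exact pow_ne_zero (j₀ : ℕ) (show (-1:ℂ) ≠ 0 by norm_num) h
    · rw [coordFn_elemSkew_of_not_subset (I r) (hI r) _ _
        (hj₀ (I r) (Finset.mem_image.2 ⟨r, Finset.mem_erase.2 ⟨hr, Finset.mem_univ r⟩, rfl⟩)),
        mul_zero]
  · -- Part 2
    intro s t u hs ht hu hst hus hut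
    obtain ⟨x, hxmem, hxs, hxt⟩ := exists_good_tensor hk s hs {t}
      (by simp [ht]) (by simp [Ne.symm hst]) (by simp; omega)
    obtain ⟨y, hymem, hyt, hys⟩ := exists_good_tensor hk t ht {s}
      (by simp [hs]) (by simp [hst]) (by simp; omega)
    obtain ⟨z, hzmem, hzu, hz0⟩ := exists_good_tensor hk u hu {s, t}
      (by intro b hb; rcases Finset.mem_insert.1 hb with rfl | hb
          · exact hs
          · rw [Finset.mem_singleton.1 hb]; exact ht)
      (by intro b hb; rcases Finset.mem_insert.1 hb with rfl | hb
          · exact Ne.symm hus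
          · rw [Finset.mem_singleton.1 hb]; exact Ne.symm hut)
      (le_trans (Finset.card_insert_le _ _) (by simp; omega))
    have e1 : coordFn n k t ht x = 0 := hxt t ht (Finset.mem_singleton_self t)
    have e2 : coordFn n k s hs y = 0 := hys s hs (Finset.mem_singleton_self s)
    constructor
    · -- the rank computation
      set V := skewSubmodule n k with hV
      set L : V →ₗ[ℂ] ℂ × ℂ :=
        LinearMap.prod ((coordFn n k s hs).comp V.subtype)
          ((coordFn n k t ht).comp V.subtype) with hL
      have hsurj : Function.Surjective L := by
        rintro ⟨c1, c2⟩
        refine ⟨(c1 / coordFn n k s hs x) • ⟨x, hxmem⟩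
          + (c2 / coordFn n k t ht y) • ⟨y, hymem⟩, ?_⟩
        simp only [hL, map_add, map_smul, LinearMap.prod_apply, Function.prod,
          LinearMap.comp_apply, Submodule.coe_subtype, Prod.smul_mk, Prod.mk_add_mk,
          smul_eq_mul, Prod.mk.injEq]
        rw [e1, e2]
        constructor
        · rw [mul_zero, add_zero, div_mul_cancel₀ c1 hxs]
        · rw [mul_zero, zero_add, div_mul_cancel₀ c2 hyt]
      have hrank := LinearMap.finrank_range_add_finrank_ker L
      rw [LinearMap.range_eq_top.2 hsurj, finrank_top] at hrank
      have h2 : Module.finrank ℂ (ℂ × ℂ) = 2 := by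
        rw [Module.finrank_prod, Module.finrank_self]
      rw [h2] at hrank
      set E := skewSubmodule n k ⊓ LinearMap.ker (coordFn n k s hs)
          ⊓ LinearMap.ker (coordFn n k t ht) with hE
      have hle : E ≤ V := le_trans inf_le_left inf_le_left
      have hker : LinearMap.ker L = Submodule.comap V.subtype E := by
        ext w
        simp only [hL, hE, LinearMap.mem_ker, LinearMap.prod_apply, Function.prod,
          LinearMap.comp_apply, Submodule.coe_subtype, Prod.mk_eq_zero,
          Submodule.mem_comap, Submodule.mem_inf, and_assoc]
        exact ⟨fun h => ⟨w.2, h.1, h.2⟩, fun h => ⟨h.2.1, h.2.2⟩⟩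
      have heq : Module.finrank ℂ (LinearMap.ker L) = Module.finrank ℂ E := by
        rw [hker]
        exact LinearEquiv.finrank_eq (Submodule.comapSubtypeEquivOfLe hle)
      rw [heq] at hrank
      omega
    · refine ⟨z, ?_, hzu⟩
      refine Submodule.mem_inf.2 ⟨Submodule.mem_inf.2 ⟨hzmem, ?_⟩, ?_⟩
      · exact LinearMap.mem_ker.2 (hz0 s hs (Finset.mem_insert_self s {t}))
      · exact LinearMap.mem_ker.2 (hz0 t ht (Finset.mem_insert.2 (Or.inr (Finset.mem_singleton_self t))))
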